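/- Let G be a locally finite graph and χ : V(G) → ℤ. If there exists a real-valued flow g in G with f^out(g)(u) = χ(u) for every vertex u, then there exists an integer-valued flow f in G with f^out(f)(u) = χ(u) for every vertex u and |f(u,v) − g(u,v)| < 1 for all u,v ∈ V(G). -/

import Mathlib

open scoped Classical

/-- A real number is an integer. -/
def IsInt (x : ℝ) : Prop := ∃ z : ℤ, x = (z : ℝ)

lemma IsInt.zero : IsInt 0 := ⟨0, by simp⟩

lemma IsInt.add {x y : ℝ} (hx : IsInt x) (hy : IsInt y) : IsInt (x + y) := by
  obtain ⟨a, rfl⟩ := hx; obtain ⟨b, rfl⟩ := hy; exact ⟨a + b, by push_cast; ring⟩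

lemma IsInt.neg' {x : ℝ} (hx : IsInt x) : IsInt (-x) := by
  obtain ⟨a, rfl⟩ := hx; exact ⟨-a, by push_cast; ring⟩

lemma IsInt.sub {x y : ℝ} (hx : IsInt x) (hy : IsInt y) : IsInt (x - y) := by
  obtain ⟨a, rfl⟩ := hx; obtain ⟨b, rfl⟩ := hy; exact ⟨a - b, by push_cast; ring⟩

lemma IsInt.sum {α : Type*} (s : Finset α) (f : α → ℝ) (h : ∀ a ∈ s, IsInt (f a)) :
    IsInt (∑ a ∈ s, f a) := by
  classical
  induction s using Finset.induction_on with
  | empty => simpa using IsInt.zero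
  | insert a s hx ih =>
    rw [Finset.sum_insert hx]
    exact (h _ (Finset.mem_insert_self _ _)).add
      (ih fun b hb => h b (Finset.mem_insert_of_mem hb))


section Cycle

variable {W : Type*}

lemma list_length_le_card (A : Finset W) (l : List W) (hnd : l.Nodup)
    (hA : ∀ x ∈ l, x ∈ A) : l.length ≤ A.card := by
  classical
  rw [← List.toFinset_card_of_nodup hnd]
  exact Finset.card_le_card (fun x hx => hA x (List.mem_toFinset.1 hx))

lemma extend_or_cycle (A : Finset W) (R : W → W → Prop)
    (hsymm : ∀ u v, R u v → R v u) (hirr : ∀ u, ¬ R u u)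
    (hsupp : ∀ u v, R u v → u ∈ A ∧ v ∈ A) (star : W)
    (hdeg : ∀ u v, u ≠ star → R u v → ∃ w, R u w ∧ w ≠ v)
    (l : List W) (hnd : l.Nodup) (hch : l.Chain' R) (hl2 : 2 ≤ l.length)
    (hAmem : ∀ x ∈ l, x ∈ A)
    (hds : ∀ x ∈ l.dropLast, x ≠ star)
    (hstar : star ∈ l ∨ ∀ b, ¬ R star b) :
    (∃ cyc : List W, ∃ h3 : 3 ≤ cyc.length, cyc.Nodup ∧ cyc.Chain' R ∧
        R (cyc.get ⟨cyc.length - 1, by omega⟩) (cyc.get ⟨0, by omega⟩)) ∨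
    (∃ w, ((w :: l).Nodup ∧ (w :: l).Chain' R ∧ 2 ≤ (w :: l).length ∧
      (∀ x ∈ (w :: l), x ∈ A) ∧
      (∀ x ∈ (w :: l).dropLast, x ≠ star) ∧
      (star ∈ (w :: l) ∨ ∀ b, ¬ R star b))) := by
  obtain ⟨a, l', rfl⟩ : ∃ a l', l = a :: l' := by
    cases l with
    | nil => simp at hl2
    | cons a l' => exact ⟨a, l', rfl⟩
  obtain ⟨b, t, rfl⟩ : ∃ b t, l' = b :: t := by
    cases l' with
    | nil => simp at hl2
    | cons b t => exact ⟨b, t, rfl⟩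
  have hab : R a b := (List.isChain_cons_cons.1 hch).1
  have hastar : a ≠ star := by
    apply hds
    rw [List.dropLast_cons₂]
    exact List.mem_cons_self
  obtain ⟨w, haw, hwb⟩ := hdeg a b hastar hab
  have hwa : w ≠ a := fun h => hirr a (h ▸ haw)
  by_cases hw : w ∈ a :: b :: t
  · -- found a cycle
    left
    obtain ⟨j, hj⟩ := List.mem_iff_get.1 hw
    have hj0 : j.1 ≠ 0 := by
      intro h
      apply hwa
      rw [← hj]
      have : (a :: b :: t).get j = (a :: b :: t).get ⟨0, by simp⟩ := by congr 1; exact Fin.ext h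
      rw [this]; rfl
    have hj1 : j.1 ≠ 1 := by
      intro h
      apply hwb
      rw [← hj]
      have : (a :: b :: t).get j = (a :: b :: t).get ⟨1, by simp⟩ := by congr 1; exact Fin.ext h
      rw [this]; rfl
    have hj2 : 2 ≤ j.1 := by omega
    refine ⟨(a :: b :: t).take (j.1 + 1), ?_, ?_, ?_, ?_⟩
    · rw [List.length_take]
      have := j.2
      simp only [List.length_cons] at this ⊢
      omega
    · exact hnd.sublist (List.take_sublist _ _)
    · exact hch.take _
    · have hlen : ((a :: b :: t).take (j.1 + 1)).length = j.1 + 1 := by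
        rw [List.length_take]; have := j.2; omega
      have h1 : ((a :: b :: t).take (j.1+1)).get ⟨((a :: b :: t).take (j.1+1)).length - 1, by omega⟩ = (a :: b :: t).get j := by
        simp only [List.get_eq_getElem, List.getElem_take]
        congr 1
        omega
      have h2 : ((a :: b :: t).take (j.1+1)).get ⟨0, by omega⟩ = (a :: b :: t).get ⟨0, by simp⟩ := by
        simp only [List.get_eq_getElem, List.getElem_take]
      rw [h1, h2, hj]
      exact hsymm _ _ haw
  · -- extend
    right
    have hwstar : w ≠ star := by
      rcases hstar with h | h
      · intro hws; exact hw (hws ▸ h)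
      · intro hws; exact h a (hws ▸ hsymm _ _ haw)
    refine ⟨w, List.nodup_cons.2 ⟨hw, hnd⟩, List.isChain_cons_cons.2 ⟨hsymm _ _ haw, hch⟩,
      by simp, ?_, ?_, ?_⟩
    · intro x hx
      rcases List.mem_cons.1 hx with rfl | hx
      · exact (hsupp _ _ haw).2
      · exact hAmem _ hx
    · intro x hx
      rw [List.dropLast_cons₂] at hx
      rcases List.mem_cons.1 hx with rfl | hx
      · exact hwstar
      · exact hds _ hx
    · rcases hstar with h | h
      · exact Or.inl (List.mem_cons_of_mem _ h)
      · exact Or.inr h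

end Cycle

section Cycle2
variable {W : Type*}

lemma grow_path (A : Finset W) (R : W → W → Prop)
    (hsymm : ∀ u v, R u v → R v u) (hirr : ∀ u, ¬ R u u)
    (hsupp : ∀ u v, R u v → u ∈ A ∧ v ∈ A) (star : W)
    (hdeg : ∀ u v, u ≠ star → R u v → ∃ w, R u w ∧ w ≠ v) :
    ∀ (m : ℕ) (l : List W),
      l.Nodup → l.Chain' R → 2 ≤ l.length →
      (∀ x ∈ l, x ∈ A) →
      (∀ x ∈ l.dropLast, x ≠ star) →
      (star ∈ l ∨ ∀ b, ¬ R star b) →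
      A.card ≤ m + l.length →
      ∃ cyc : List W, ∃ h3 : 3 ≤ cyc.length, cyc.Nodup ∧ cyc.Chain' R ∧
        R (cyc.get ⟨cyc.length - 1, by omega⟩) (cyc.get ⟨0, by omega⟩) := by
  intro m
  induction m with
  | zero =>
    intro l hnd hch hl2 hAmem hds hstar hcard
    rcases extend_or_cycle A R hsymm hirr hsupp star hdeg l hnd hch hl2 hAmem hds hstar with
      h | ⟨w, hnd', _, _, hAmem', _, _⟩
    · exact h
    · exfalso
      have := list_length_le_card A (w :: l) hnd' hAmem'
      simp only [List.length_cons] at this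
      omega
  | succ m ih =>
    intro l hnd hch hl2 hAmem hds hstar hcard
    rcases extend_or_cycle A R hsymm hirr hsupp star hdeg l hnd hch hl2 hAmem hds hstar with
      h | ⟨w, hnd', hch', hl2', hAmem', hds', hstar'⟩
    · exact h
    · exact ih (w :: l) hnd' hch' hl2' hAmem' hds' hstar'
        (by simp only [List.length_cons]; omega)

lemma exists_list_cycle (A : Finset W) (R : W → W → Prop)
    (hsymm : ∀ u v, R u v → R v u) (hirr : ∀ u, ¬ R u u)
    (hsupp : ∀ u v, R u v → u ∈ A ∧ v ∈ A) (star : W)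
    (hdeg : ∀ u v, u ≠ star → R u v → ∃ w, R u w ∧ w ≠ v)
    (hne : ∃ a b, R a b) :
    ∃ cyc : List W, ∃ h3 : 3 ≤ cyc.length, cyc.Nodup ∧ cyc.Chain' R ∧
      R (cyc.get ⟨cyc.length - 1, by omega⟩) (cyc.get ⟨0, by omega⟩) := by
  classical
  by_cases hstar : ∃ b, R star b
  · obtain ⟨b, hb⟩ := hstar
    have hbstar : b ≠ star := fun h => hirr star (h ▸ hb)
    apply grow_path A R hsymm hirr hsupp star hdeg A.card (b :: [star])
    · exact List.nodup_cons.2 ⟨by simp [hbstar], List.nodup_singleton _⟩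
    · exact List.isChain_cons_cons.2 ⟨hsymm _ _ hb, List.isChain_singleton _⟩
    · simp
    · intro x hx
      rcases List.mem_cons.1 hx with rfl | hx
      · exact (hsupp _ _ hb).2
      · simp only [List.mem_singleton] at hx
        exact hx ▸ (hsupp _ _ hb).1
    · intro x hx
      simp only [List.dropLast_cons₂, List.dropLast_singleton, List.mem_singleton] at hx
      exact hx ▸ hbstar
    · exact Or.inl (by simp)
    · simp
  · push_neg at hstar
    obtain ⟨a, b, hab⟩ := hne
    apply grow_path A R hsymm hirr hsupp star hdeg A.card (a :: [b])
    · have : a ≠ b := fun h => hirr b (h ▸ hab)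
      exact List.nodup_cons.2 ⟨by simp [this], List.nodup_singleton _⟩
    · exact List.isChain_cons_cons.2 ⟨hab, List.isChain_singleton _⟩
    · simp
    · intro x hx
      rcases List.mem_cons.1 hx with rfl | hx
      · exact (hsupp _ _ hab).1
      · simp only [List.mem_singleton] at hx
        exact hx ▸ (hsupp _ _ hab).2
    · intro x hx
      simp only [List.dropLast_cons₂, List.dropLast_singleton, List.mem_singleton] at hx
      exact hx ▸ (fun h => hstar b (h ▸ hab))
    · exact Or.inr hstar
    · simp

end Cycle2

section Cycle3
variable {W : Type*}

lemma exists_fin_cycle (A : Finset W) (R : W → W → Prop)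
    (hsymm : ∀ u v, R u v → R v u) (hirr : ∀ u, ¬ R u u)
    (hsupp : ∀ u v, R u v → u ∈ A ∧ v ∈ A) (star : W)
    (hdeg : ∀ u v, u ≠ star → R u v → ∃ w, R u w ∧ w ≠ v)
    (hne : ∃ a b, R a b) :
    ∃ (m : ℕ) (c : Fin (m + 3) → W),
      Function.Injective c ∧ ∀ i : Fin (m + 3), R (c i) (c (i + 1)) := by
  obtain ⟨cyc, h3, hnd, hch, hclose⟩ := exists_list_cycle A R hsymm hirr hsupp star hdeg hne
  have hlen : cyc.length = (cyc.length - 3) + 3 := by omega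
  refine ⟨cyc.length - 3, fun i => cyc.get ⟨i.1, by omega⟩, ?_, ?_⟩
  · intro i j hij
    have := List.nodup_iff_injective_get.1 hnd hij
    simpa [Fin.ext_iff] using this
  · intro i
    have hival : (i + 1).1 = (i.1 + 1) % (cyc.length - 3 + 3) := by
      rw [Fin.add_def]
      simp [Fin.val_one]
    by_cases hcase : i.1 + 1 < cyc.length - 3 + 3
    · have h1 : (i + 1).1 = i.1 + 1 := by rw [hival, Nat.mod_eq_of_lt hcase]
      have hg := List.isChain_iff_getElem.1 hch i.1 (by omega)
      simp only [List.get_eq_getElem] at hg ⊢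
      simp only [h1]
      exact hg
    · have hi : i.1 = cyc.length - 3 + 2 := by have := i.2; omega
      have h1 : (i + 1).1 = 0 := by
        rw [hival, hi]
        have : cyc.length - 3 + 2 + 1 = cyc.length - 3 + 3 := by omega
        rw [this, Nat.mod_self]
      simp only [List.get_eq_getElem] at hclose ⊢
      simp only [h1, hi]
      have he : cyc.length - 3 + 2 = cyc.length - 1 := by omega
      simp only [he]
      exact hclose

end Cycle3

section DD
variable {W : Type*} {m : ℕ}

noncomputable def dd (c : Fin (m + 3) → W) (u v : W) : ℤ :=
  (∑ i : Fin (m + 3), if c i = u ∧ c (i + 1) = v then 1 else 0)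
  - (∑ i : Fin (m + 3), if c i = v ∧ c (i + 1) = u then 1 else 0)

lemma dd_anti (c : Fin (m + 3) → W) (u v : W) : dd c u v = - dd c v u := by
  unfold dd; ring

lemma dd_support (c : Fin (m + 3) → W) (u v : W) (h : dd c u v ≠ 0) :
    ∃ i, (c i = u ∧ c (i + 1) = v) ∨ (c i = v ∧ c (i + 1) = u) := by
  by_contra hc
  push_neg at hc
  apply h
  unfold dd
  rw [Finset.sum_eq_zero, Finset.sum_eq_zero, sub_zero]
  · exact fun i _ => if_neg (fun hh => (hc i).2 hh.1 hh.2)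
  · exact fun i _ => if_neg (fun hh => (hc i).1 hh.1 hh.2)

lemma fin_add_two_ne (i : Fin (m + 3)) : i + 2 ≠ i := by
  intro h
  have h2 : (2 : Fin (m + 3)) = 0 := by
    have := add_left_cancel (a := i) (b := (2 : Fin (m+3))) (c := (0 : Fin (m+3)))
      (by rw [add_zero]; exact h)
    exact this
  have hv : ((2 : Fin (m + 3)) : ℕ) = 0 := by rw [h2]; rfl
  rw [show (2 : Fin (m+3)) = 1 + 1 by ext; simp [Fin.val_add], Fin.add_def] at hv
  have hv2 : (1 + 1) % (m + 3) = 0 := hv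
  rw [Nat.mod_eq_of_lt (by omega)] at hv2
  omega

lemma dd_forward (c : Fin (m + 3) → W) (hc : Function.Injective c) {u v : W} (i : Fin (m + 3))
    (h1 : c i = u) (h2 : c (i + 1) = v) : dd c u v = 1 := by
  have hs1 : (∑ j : Fin (m + 3), if c j = u ∧ c (j + 1) = v then (1:ℤ) else 0) = 1 := by
    rw [Finset.sum_eq_single i]
    · exact if_pos ⟨h1, h2⟩
    · intro j _ hj
      exact if_neg (fun hh => hj (hc (hh.1.trans h1.symm)))
    · exact fun h => absurd (Finset.mem_univ i) h
  have hs2 : (∑ j : Fin (m + 3), if c j = v ∧ c (j + 1) = u then (1:ℤ) else 0) = 0 := by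
    apply Finset.sum_eq_zero
    intro j _
    apply if_neg
    rintro ⟨e1, e2⟩
    have hji : j = i + 1 := hc (e1.trans h2.symm)
    have : c (i + 1 + 1) = c i := by rw [← hji, e2, h1]
    have h22 : i + 1 + 1 = i := hc this
    rw [add_assoc, show (1 : Fin (m+3)) + 1 = 2 by ext; simp [Fin.val_add]] at h22
    exact fin_add_two_ne i h22
  unfold dd
  rw [hs1, hs2, sub_zero]

lemma dd_balance (c : Fin (m + 3) → W) (B : Finset W) (hmem : ∀ i, c i ∈ B) (u : W) :
    ∑ v ∈ B, dd c u v = 0 := by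
  unfold dd
  rw [Finset.sum_sub_distrib]
  rw [Finset.sum_comm, Finset.sum_comm (s := B)]
  have e1 : ∀ i : Fin (m+3), (∑ v ∈ B, if c i = u ∧ c (i + 1) = v then (1:ℤ) else 0)
      = if c i = u then 1 else 0 := by
    intro i
    by_cases h : c i = u
    · simp only [h, true_and]
      rw [Finset.sum_ite_eq]
      exact if_pos (hmem _)
    · simp [h]
  have e2 : ∀ i : Fin (m+3), (∑ v ∈ B, if c i = v ∧ c (i + 1) = u then (1:ℤ) else 0)
      = if c (i + 1) = u then 1 else 0 := by
    intro i
    by_cases h : c (i + 1) = u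
    · simp only [h, and_true]
      rw [Finset.sum_ite_eq]
      exact if_pos (hmem _)
    · simp [h]
  rw [Finset.sum_congr rfl (fun i _ => e1 i), Finset.sum_congr rfl (fun i _ => e2 i)]
  rw [sub_eq_zero]
  exact (Equiv.sum_comp (Equiv.addRight (1 : Fin (m+3))) (fun i => if c i = u then (1:ℤ) else 0)).symm

end DD

section Step

variable {V : Type*}

/-- Pairs in `T ×ˢ T` where `f` is not an integer. -/
noncomputable def Frac (T : Finset V) (f : V → V → ℝ) : Finset (V × V) :=
  (T ×ˢ T).filter fun p => ¬ IsInt (f p.1 p.2)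

lemma mem_Frac {T : Finset V} {f : V → V → ℝ} {p : V × V} :
    p ∈ Frac T f ↔ (p.1 ∈ T ∧ p.2 ∈ T) ∧ ¬ IsInt (f p.1 p.2) := by
  simp [Frac, Finset.mem_filter, Finset.mem_product]

lemma step_lemma (T S : Finset V) (g f : V → V → ℝ)
    (hganti : ∀ u v, g u v = - g v u)
    (hint : ∀ u ∈ S, ∃ z : ℤ, ∑ v ∈ T, g u v = (z : ℝ))
    (hfanti : ∀ u v, f u v = - f v u)
    (hinv : ∀ u v, ((⌊g u v⌋ : ℝ) ≤ f u v ∧ f u v ≤ (⌈g u v⌉ : ℝ)))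
    (hdem : ∀ u ∈ S, ∑ v ∈ T, f u v = ∑ v ∈ T, g u v)
    (hne : (Frac T f).Nonempty) :
    ∃ f₁ : V → V → ℝ, (∀ u v, f₁ u v = - f₁ v u) ∧
      (∀ u v, ((⌊g u v⌋ : ℝ) ≤ f₁ u v ∧ f₁ u v ≤ (⌈g u v⌉ : ℝ))) ∧
      (∀ u ∈ S, ∑ v ∈ T, f₁ u v = ∑ v ∈ T, g u v) ∧
      Frac T f₁ ⊂ Frac T f := by
  classical
  set A : Finset (Option V) := Finset.insertNone T with hA
  set F : Option V → Option V → ℝ := fun a b =>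
    match a, b with
    | some u, some v => f u v
    | some u, none => if u ∈ S then 0 else -(∑ v ∈ T, f u v)
    | none, some v => if v ∈ S then 0 else (∑ w ∈ T, f v w)
    | none, none => 0
    with hF
  have hFanti : ∀ a b, F a b = - F b a := by
    rintro (_ | u) (_ | v)
    · show (0:ℝ) = -(0:ℝ)
      simp
    · show (if v ∈ S then 0 else (∑ w ∈ T, f v w)) =
        -(if v ∈ S then 0 else -(∑ w ∈ T, f v w))
      split <;> simp
    · show (if u ∈ S then 0 else -(∑ w ∈ T, f u w)) =
        -(if u ∈ S then 0 else (∑ w ∈ T, f u w))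
      split <;> simp
    · show f u v = - f v u
      exact hfanti u v
  set R : Option V → Option V → Prop :=
    fun a b => ¬ IsInt (F a b) ∧ a ∈ A ∧ b ∈ A with hR
  have hsymm : ∀ a b, R a b → R b a := by
    rintro a b ⟨h1, h2, h3⟩
    refine ⟨fun hi => h1 ?_, h3, h2⟩
    rw [hFanti a b]
    exact hi.neg'
  have hirr : ∀ a, ¬ R a a := by
    rintro a ⟨h1, -⟩
    apply h1
    have := hFanti a a
    have hz : F a a = 0 := by linarith
    rw [hz]; exact IsInt.zero
  have hsupp : ∀ a b, R a b → a ∈ A ∧ b ∈ A := fun a b h => ⟨h.2.1, h.2.2⟩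
  -- integrality of row sums
  have hrow : ∀ u : V, IsInt (∑ b ∈ A, F (some u) b) := by
    intro u
    rw [hA, Finset.sum_insertNone]
    by_cases hu : u ∈ S
    · have h0 : F (some u) none = 0 := by simp [hF, hu]
      rw [h0, zero_add]
      obtain ⟨z, hz⟩ := hint u hu
      exact ⟨z, by rw [← hz, ← hdem u hu]⟩
    · have h0 : F (some u) none = -(∑ v ∈ T, f u v) := by simp [hF, hu]
      rw [h0]
      have : ∀ v ∈ T, F (some u) (some v) = f u v := fun v _ => rfl
      rw [Finset.sum_congr rfl this]
      exact ⟨0, by push_cast; ring⟩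
  have hdeg : ∀ a b, a ≠ none → R a b → ∃ w, R a w ∧ w ≠ b := by
    intro a b ha hab
    obtain ⟨u, rfl⟩ := Option.ne_none_iff_exists'.1 ha
    by_contra hno
    push_neg at hno
    have hint' : ∀ w ∈ A.erase b, IsInt (F (some u) w) := by
      intro w hw
      by_contra hwint
      have hRw : R (some u) w := ⟨hwint, hab.2.1, Finset.mem_of_mem_erase hw⟩
      exact (Finset.ne_of_mem_erase hw) (hno w hRw)
    have hbA : b ∈ A := hab.2.2
    have := hrow u
    rw [← Finset.sum_erase_add A _ hbA] at this
    have hsum : IsInt (∑ w ∈ A.erase b, F (some u) w) := IsInt.sum _ _ hint'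
    have : IsInt (F (some u) b) := by
      have h2 := this
      obtain ⟨z1, hz1⟩ := h2
      obtain ⟨z2, hz2⟩ := hsum
      exact ⟨z1 - z2, by push_cast; linarith⟩
    exact hab.1 this
  have hneR : ∃ a b, R a b := by
    obtain ⟨p, hp⟩ := hne
    rw [mem_Frac] at hp
    exact ⟨some p.1, some p.2, hp.2, by simp [hA, hp.1.1], by simp [hA, hp.1.2]⟩
  obtain ⟨m, c, hcinj, hcedge⟩ :=
    exists_fin_cycle A R hsymm hirr hsupp none hdeg hneR
  have hcA : ∀ i, c i ∈ A := fun i => (hcedge i).2.1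
  -- the set of forward edges with both endpoints real
  set I : Finset (Fin (m + 3)) :=
    Finset.univ.filter (fun i => c i ≠ none ∧ c (i + 1) ≠ none) with hI
  have hInonempty : I.Nonempty := by
    by_cases hn : ∃ i₀, c i₀ = none
    · obtain ⟨i₀, hi₀⟩ := hn
      refine ⟨i₀ + 1, ?_⟩
      rw [hI, Finset.mem_filter]
      refine ⟨Finset.mem_univ _, ?_, ?_⟩
      · intro h
        have : i₀ + 1 = i₀ := hcinj (h.trans hi₀.symm)
        have h1 : (1 : Fin (m+3)) = 0 := by
          have := add_left_cancel (a := i₀) (b := (1 : Fin (m+3))) (c := 0)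
            (by rw [add_zero]; exact this)
          exact this
        have : ((1 : Fin (m+3)) : ℕ) = 0 := by rw [h1]; rfl
        rw [Fin.val_one] at this
        omega
      · intro h
        have : i₀ + 1 + 1 = i₀ := hcinj (h.trans hi₀.symm)
        rw [add_assoc, show (1 : Fin (m+3)) + 1 = 2 by ext; simp [Fin.val_add]] at this
        exact fin_add_two_ne i₀ this
    · push_neg at hn
      exact ⟨0, by rw [hI, Finset.mem_filter]; exact ⟨Finset.mem_univ _, hn 0, hn _⟩⟩
  set ε : ℝ := I.inf' hInonempty
    (fun i => (⌈F (c i) (c (i + 1))⌉ : ℝ) - F (c i) (c (i + 1))) with hε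
  have hfracedge : ∀ i, ¬ IsInt (F (c i) (c (i + 1))) := fun i => (hcedge i).1
  have hεpos : 0 < ε := by
    rw [hε, Finset.lt_inf'_iff]
    intro i _
    have h1 := Int.le_ceil (F (c i) (c (i + 1)))
    have h2 : F (c i) (c (i + 1)) ≠ (⌈F (c i) (c (i + 1))⌉ : ℝ) :=
      fun h => hfracedge i ⟨_, h⟩
    have : F (c i) (c (i+1)) < (⌈F (c i) (c (i + 1))⌉ : ℝ) := lt_of_le_of_ne h1 h2
    linarith
  set f₁ : V → V → ℝ := fun u v => f u v + ε * (dd c (some u) (some v) : ℝ) with hf₁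
  -- d = ±1 facts
  have hdd_forward_bound : ∀ u v : V, ∀ i, c i = some u → c (i + 1) = some v →
      f₁ u v ≤ (⌈g u v⌉ : ℝ) := by
    intro u v i h1 h2
    have hd1 : dd c (some u) (some v) = 1 := dd_forward c hcinj i h1 h2
    have hiI : i ∈ I := by
      rw [hI, Finset.mem_filter]
      exact ⟨Finset.mem_univ _, by rw [h1]; simp, by rw [h2]; simp⟩
    have hεle : ε ≤ (⌈f u v⌉ : ℝ) - f u v := by
      have := Finset.inf'_le (f := fun i => (⌈F (c i) (c (i + 1))⌉ : ℝ) - F (c i) (c (i + 1)))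
        hiI
      rw [h1, h2] at this
      exact this
    have hceil : (⌈f u v⌉ : ℝ) ≤ (⌈g u v⌉ : ℝ) := by
      have : ⌈f u v⌉ ≤ ⌈g u v⌉ := Int.ceil_le.2 (hinv u v).2
      exact_mod_cast this
    rw [hf₁]
    simp only [hd1]
    push_cast
    linarith
  have hup : ∀ u v, f₁ u v ≤ (⌈g u v⌉ : ℝ) := by
    intro u v
    by_cases hd : dd c (some u) (some v) = 0
    · rw [hf₁]; simp only [hd]; push_cast
      have := (hinv u v).2
      linarith
    · rcases dd_support c _ _ hd with ⟨i, ⟨h1, h2⟩ | ⟨h1, h2⟩⟩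
      · exact hdd_forward_bound u v i h1 h2
      · have hd1 : dd c (some v) (some u) = 1 := dd_forward c hcinj i h1 h2
        have hdm : dd c (some u) (some v) = -1 := by rw [dd_anti, hd1]
        rw [hf₁]
        simp only [hdm]
        push_cast
        have := (hinv u v).2
        linarith
  have hf₁anti : ∀ u v, f₁ u v = - f₁ v u := by
    intro u v
    rw [hf₁]
    simp only
    rw [hfanti u v, dd_anti]
    push_cast
    ring
  have hlow : ∀ u v, (⌊g u v⌋ : ℝ) ≤ f₁ u v := by
    intro u v
    have h1 := hup v u
    have hceil : (⌈g v u⌉ : ℝ) = -((⌊g u v⌋ : ℤ) : ℝ) := by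
      rw [hganti v u, Int.ceil_neg]
      push_cast
      ring
    rw [hf₁anti u v]
    rw [hceil] at h1
    linarith
  have hdem₁ : ∀ u ∈ S, ∑ v ∈ T, f₁ u v = ∑ v ∈ T, g u v := by
    intro u hu
    have hbal := dd_balance c A hcA (some u)
    rw [hA, Finset.sum_insertNone] at hbal
    have hnone : dd c (some u) none = 0 := by
      by_contra hd
      rcases dd_support c _ _ hd with ⟨i, ⟨h1, h2⟩ | ⟨h1, h2⟩⟩
      · have hfr := hfracedge i
        rw [h1, h2] at hfr
        apply hfr
        show IsInt (if u ∈ S then 0 else -(∑ v ∈ T, f u v))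
        rw [if_pos hu]; exact IsInt.zero
      · have hfr := hfracedge i
        rw [h1, h2] at hfr
        apply hfr
        show IsInt (if u ∈ S then 0 else (∑ w ∈ T, f u w))
        rw [if_pos hu]; exact IsInt.zero
    have hTd : ∑ v ∈ T, dd c (some u) (some v) = 0 := by
      rw [hnone] at hbal
      linarith
    calc ∑ v ∈ T, f₁ u v
        = ∑ v ∈ T, f u v + ε * ((∑ v ∈ T, dd c (some u) (some v) : ℤ) : ℝ) := by
          rw [hf₁]
          simp only
          rw [Finset.sum_add_distrib, ← Finset.mul_sum]
          push_cast
          ring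
      _ = ∑ v ∈ T, f u v := by rw [hTd]; simp
      _ = ∑ v ∈ T, g u v := hdem u hu
  have hcycle_frac : ∀ u v : V, dd c (some u) (some v) ≠ 0 → ¬ IsInt (f u v) := by
    intro u v hd
    rcases dd_support c _ _ hd with ⟨i, ⟨h1, h2⟩ | ⟨h1, h2⟩⟩
    · have hfr := hfracedge i; rw [h1, h2] at hfr; exact hfr
    · have hfr := hfracedge i; rw [h1, h2] at hfr
      intro hi
      apply hfr
      show IsInt (f v u)
      rw [hfanti v u]
      exact hi.neg'
  have hcycle_memT : ∀ u v : V, dd c (some u) (some v) ≠ 0 → u ∈ T ∧ v ∈ T := by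
    intro u v hd
    rcases dd_support c _ _ hd with ⟨i, ⟨h1, h2⟩ | ⟨h1, h2⟩⟩
    · have m1 := hcA i; have m2 := hcA (i + 1)
      rw [h1] at m1; rw [h2] at m2
      rw [hA, Finset.some_mem_insertNone] at m1 m2
      exact ⟨m1, m2⟩
    · have m1 := hcA i; have m2 := hcA (i + 1)
      rw [h1] at m1; rw [h2] at m2
      rw [hA, Finset.some_mem_insertNone] at m1 m2
      exact ⟨m2, m1⟩
  have hsub : Frac T f₁ ⊆ Frac T f := by
    intro p hp
    rw [mem_Frac] at hp ⊢
    refine ⟨hp.1, ?_⟩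
    by_cases hd : dd c (some p.1) (some p.2) = 0
    · intro hi
      apply hp.2
      have heq : f₁ p.1 p.2 = f p.1 p.2 := by rw [hf₁]; simp [hd]
      rw [heq]
      exact hi
    · exact hcycle_frac _ _ hd
  obtain ⟨istar, hiI, hεeq⟩ := Finset.exists_mem_eq_inf' hInonempty
    (fun i => (⌈F (c i) (c (i + 1))⌉ : ℝ) - F (c i) (c (i + 1)))
  rw [← hε] at hεeq
  rw [hI, Finset.mem_filter] at hiI
  obtain ⟨ustar, hcu⟩ := Option.ne_none_iff_exists'.1 hiI.2.1
  obtain ⟨vstar, hcv⟩ := Option.ne_none_iff_exists'.1 hiI.2.2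
  have hd1 : dd c (some ustar) (some vstar) = 1 := dd_forward c hcinj istar hcu hcv
  have hfeq : F (c istar) (c (istar + 1)) = f ustar vstar := by rw [hcu, hcv]
  have hf₁int : IsInt (f₁ ustar vstar) := by
    rw [hf₁]
    simp only [hd1]
    rw [hεeq, hfeq]
    exact ⟨⌈f ustar vstar⌉, by push_cast; ring⟩
  have hwit_mem : (ustar, vstar) ∈ Frac T f :=
    mem_Frac.2 ⟨hcycle_memT _ _ (by rw [hd1]; exact one_ne_zero),
      hcycle_frac _ _ (by rw [hd1]; exact one_ne_zero)⟩
  have hwit_not : (ustar, vstar) ∉ Frac T f₁ := fun h => (mem_Frac.1 h).2 hf₁int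
  exact ⟨f₁, hf₁anti, fun u v => ⟨hlow u v, hup u v⟩, hdem₁,
    (Finset.ssubset_iff_of_subset hsub).2 ⟨_, hwit_mem, hwit_not⟩⟩

end Step

section FiniteLemma
variable {V : Type*}

lemma finite_integral (T S : Finset V) (g : V → V → ℝ)
    (hganti : ∀ u v, g u v = - g v u)
    (hint : ∀ u ∈ S, ∃ z : ℤ, ∑ v ∈ T, g u v = (z : ℝ)) :
    ∃ f : V → V → ℝ, (∀ u v, f u v = - f v u) ∧
      (∀ u v, ((⌊g u v⌋ : ℝ) ≤ f u v ∧ f u v ≤ (⌈g u v⌉ : ℝ))) ∧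
      (∀ u ∈ S, ∑ v ∈ T, f u v = ∑ v ∈ T, g u v) ∧
      (∀ u v, u ∈ T → v ∈ T → IsInt (f u v)) := by
  classical
  suffices H : ∀ (n : ℕ) (f : V → V → ℝ), (∀ u v, f u v = - f v u) →
      (∀ u v, ((⌊g u v⌋ : ℝ) ≤ f u v ∧ f u v ≤ (⌈g u v⌉ : ℝ))) →
      (∀ u ∈ S, ∑ v ∈ T, f u v = ∑ v ∈ T, g u v) →
      (Frac T f).card ≤ n →
      ∃ f' : V → V → ℝ, (∀ u v, f' u v = - f' v u) ∧
        (∀ u v, ((⌊g u v⌋ : ℝ) ≤ f' u v ∧ f' u v ≤ (⌈g u v⌉ : ℝ))) ∧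
        (∀ u ∈ S, ∑ v ∈ T, f' u v = ∑ v ∈ T, g u v) ∧
        (∀ u v, u ∈ T → v ∈ T → IsInt (f' u v)) by
    exact H (Frac T g).card g hganti
      (fun u v => ⟨Int.floor_le _, Int.le_ceil _⟩) (fun u _ => rfl) le_rfl
  intro n
  induction n with
  | zero =>
    intro f hfa hfinv hfdem hcard
    refine ⟨f, hfa, hfinv, hfdem, fun u v hu hv => ?_⟩
    by_contra hni
    have : (u, v) ∈ Frac T f := (mem_Frac (p := (u,v))).2 ⟨⟨hu, hv⟩, hni⟩
    have := Finset.card_pos.2 ⟨_, this⟩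
    omega
  | succ n ih =>
    intro f hfa hfinv hfdem hcard
    by_cases hne : (Frac T f).Nonempty
    · obtain ⟨f₁, h1, h2, h3, h4⟩ := step_lemma T S g f hganti hint hfa hfinv hfdem hne
      have : (Frac T f₁).card < (Frac T f).card := Finset.card_lt_card h4
      exact ih f₁ h1 h2 h3 (by omega)
    · refine ⟨f, hfa, hfinv, hfdem, fun u v hu hv => ?_⟩
      by_contra hni
      exact hne ⟨(u,v), (mem_Frac (p := (u,v))).2 ⟨⟨hu, hv⟩, hni⟩⟩

end FiniteLemma

/-- Integral Flow Theorem for locally finite graphs: if a locally finite graph `G`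
admits a real-valued `χ`-flow `g` for an integer-valued demand `χ`, then it admits an
integer-valued `χ`-flow `f` with `|f u v - g u v| < 1` on every pair of vertices. -/
theorem integral_flow_theorem {V : Type*} (G : SimpleGraph V)
    (hfin : ∀ u : V, (G.neighborSet u).Finite)
    (χ : V → ℤ) (g : V → V → ℝ)
    (hganti : ∀ u v : V, g u v = - g v u)
    (hgsupp : ∀ u v : V, ¬ G.Adj u v → g u v = 0)
    (hgout : ∀ u : V, ∑ᶠ v, g u v = (χ u : ℝ)) :
    ∃ f : V → V → ℤ,
      (∀ u v : V, f u v = - f v u) ∧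
      (∀ u v : V, ¬ G.Adj u v → f u v = 0) ∧
      (∀ u : V, ∑ᶠ v, f u v = χ u) ∧
      (∀ u v : V, |(f u v : ℝ) - g u v| < 1) := by
  classical
  set Nb : V → Finset V := fun u => (hfin u).toFinset with hNb
  have hNbmem : ∀ u v, v ∈ Nb u ↔ G.Adj u v := by
    intro u v
    rw [hNb]
    simp [Set.Finite.mem_toFinset, SimpleGraph.mem_neighborSet]
  have hgNb : ∀ u, ∑ v ∈ Nb u, g u v = (χ u : ℝ) := by
    intro u
    rw [← finsum_eq_sum_of_support_subset (g u)
      (fun v hv => by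
        by_contra hvn
        exact hv (hgsupp u v (fun ha => hvn ((hNbmem u v).2 ha))))]
    exact hgout u
  set K : V × V → Finset ℤ := fun p => {⌊g p.1 p.2⌋, ⌈g p.1 p.2⌉} with hK
  set X : Type _ := ∀ p : V × V, ↥(K p) with hX
  set Z : ((V × V) ⊕ V) → Set X := fun i =>
    match i with
    | Sum.inl p => {x : X | (x (p.1, p.2) : ℤ) = - (x (p.2, p.1) : ℤ)}
    | Sum.inr u => {x : X | ∑ v ∈ Nb u, ((x (u, v) : ℤ)) = χ u} with hZ
  have hZclosed : ∀ i, IsClosed (Z i) := by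
    rintro (p | u)
    · exact isClosed_eq ((continuous_apply (p.1, p.2)).subtype_val)
        (((continuous_apply (p.2, p.1)).subtype_val).neg)
    · exact isClosed_eq
        (continuous_finset_sum _ fun v _ => (continuous_apply (u, v)).subtype_val)
        continuous_const
  have hfip : ∀ t : Finset ((V × V) ⊕ V), (⋂ i ∈ t, Z i).Nonempty := by
    intro t
    set TT : Finset V := t.biUnion (fun i => match i with
      | Sum.inl p => {p.1, p.2}
      | Sum.inr u => insert u (Nb u)) with hTT
    set SS : Finset V := t.biUnion (fun i => match i with
      | Sum.inl _ => ∅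
      | Sum.inr u => {u}) with hSS
    have hSSt : ∀ u ∈ SS, Sum.inr u ∈ t := by
      intro u hu
      rw [hSS] at hu
      obtain ⟨i, hit, hui⟩ := Finset.mem_biUnion.1 hu
      match i with
      | Sum.inl p => simp at hui
      | Sum.inr w =>
        simp only [Finset.mem_singleton] at hui
        exact hui ▸ hit
    have hSTT : ∀ u ∈ SS, u ∈ TT := by
      intro u hu
      exact Finset.mem_biUnion.2 ⟨Sum.inr u, hSSt u hu, by simp⟩
    have hNbTT : ∀ u ∈ SS, Nb u ⊆ TT := by
      intro u hu v hv
      exact Finset.mem_biUnion.2 ⟨Sum.inr u, hSSt u hu, by simp [hv]⟩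
    have hintTT : ∀ u ∈ SS, ∑ v ∈ TT, g u v = (χ u : ℝ) := by
      intro u hu
      rw [← Finset.sum_subset (hNbTT u hu) (fun v hvT hvN =>
        hgsupp u v (fun ha => hvN ((hNbmem u v).2 ha)))]
      exact hgNb u
    obtain ⟨f, hfa, hfinv, hfdem, hfint⟩ := finite_integral TT SS g hganti
      (fun u hu => ⟨χ u, hintTT u hu⟩)
    have hzero : ∀ u v, g u v = 0 → f u v = 0 := by
      intro u v h0
      have h1 := (hfinv u v).1
      have h2 := (hfinv u v).2
      rw [h0] at h1 h2
      simp only [Int.floor_zero, Int.ceil_zero, Int.cast_zero] at h1 h2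
      linarith
    have hK1 : ∀ p : V × V, p.1 ∈ TT ∧ p.2 ∈ TT → ⌊f p.1 p.2⌋ ∈ K p := by
      intro p hp
      obtain ⟨z, hz⟩ := hfint p.1 p.2 hp.1 hp.2
      rw [hz, Int.floor_intCast]
      have h1 : (⌊g p.1 p.2⌋ : ℝ) ≤ (z : ℝ) := hz ▸ (hfinv p.1 p.2).1
      have h2 : (z : ℝ) ≤ (⌈g p.1 p.2⌉ : ℝ) := hz ▸ (hfinv p.1 p.2).2
      have h1' : ⌊g p.1 p.2⌋ ≤ z := by exact_mod_cast h1
      have h2' : z ≤ ⌈g p.1 p.2⌉ := by exact_mod_cast h2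
      have h3 := Int.ceil_le_floor_add_one (g p.1 p.2)
      rw [hK]
      simp only [Finset.mem_insert, Finset.mem_singleton]
      omega
    have hK2 : ∀ p : V × V, ⌊g p.1 p.2⌋ ∈ K p := by
      intro p
      rw [hK]
      simp
    set x : X := fun p =>
      if hp : p.1 ∈ TT ∧ p.2 ∈ TT then ⟨⌊f p.1 p.2⌋, hK1 p hp⟩
      else ⟨⌊g p.1 p.2⌋, hK2 p⟩ with hx
    have hxval : ∀ u v, u ∈ TT → v ∈ TT → ((x (u, v) : ℤ) : ℝ) = f u v := by
      intro u v hu hv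
      rw [hx]
      simp only
      rw [dif_pos (⟨hu, hv⟩ : (u,v).1 ∈ TT ∧ (u,v).2 ∈ TT)]
      obtain ⟨z, hz⟩ := hfint u v hu hv
      show ((⌊f u v⌋ : ℤ) : ℝ) = f u v
      rw [hz, Int.floor_intCast]
    refine ⟨x, Set.mem_iInter₂.2 ?_⟩
    rintro (p | u) hi
    · show (x (p.1, p.2) : ℤ) = - (x (p.2, p.1) : ℤ)
      have hp1 : p.1 ∈ TT := Finset.mem_biUnion.2 ⟨Sum.inl p, hi, by simp⟩
      have hp2 : p.2 ∈ TT := Finset.mem_biUnion.2 ⟨Sum.inl p, hi, by simp⟩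
      have hr : ((x (p.1, p.2) : ℤ) : ℝ) = -((x (p.2, p.1) : ℤ) : ℝ) := by
        rw [hxval p.1 p.2 hp1 hp2, hxval p.2 p.1 hp2 hp1]
        exact hfa p.1 p.2
      exact_mod_cast hr
    · show ∑ v ∈ Nb u, ((x (u, v) : ℤ)) = χ u
      have hu : u ∈ SS := Finset.mem_biUnion.2 ⟨Sum.inr u, hi, by simp⟩
      have hr : ((∑ v ∈ Nb u, (x (u, v) : ℤ) : ℤ) : ℝ) = ((χ u : ℤ) : ℝ) := by
        push_cast
        rw [Finset.sum_congr rfl (fun v hv => hxval u v (hSTT u hu) (hNbTT u hu hv))]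
        rw [Finset.sum_subset (hNbTT u hu) (fun v hvT hvN =>
          hzero u v (hgsupp u v (fun ha => hvN ((hNbmem u v).2 ha))))]
        rw [hfdem u hu]
        exact hintTT u hu
      exact_mod_cast hr
  have hglobal : (⋂ i, Z i).Nonempty := by
    by_contra hcon
    rw [Set.not_nonempty_iff_eq_empty] at hcon
    obtain ⟨t, ht⟩ := (isCompact_univ (X := X)).elim_finite_subfamily_closed Z hZclosed
      (by rw [Set.univ_inter]; exact hcon)
    rw [Set.univ_inter] at ht
    obtain ⟨x, hxmem⟩ := hfip t
    rw [ht] at hxmem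
    exact hxmem
  obtain ⟨x, hxall⟩ := hglobal
  rw [Set.mem_iInter] at hxall
  have hsupp0 : ∀ u v, ¬ G.Adj u v → (x (u, v) : ℤ) = 0 := by
    intro u v huv
    have hKm : (x (u, v) : ℤ) ∈ ({⌊g u v⌋, ⌈g u v⌉} : Finset ℤ) := (x (u, v)).2
    have h0 : g u v = 0 := hgsupp u v huv
    simp only [h0, Int.floor_zero, Int.ceil_zero, Finset.mem_insert,
      Finset.mem_singleton, or_self] at hKm
    exact hKm
  refine ⟨fun u v => (x (u, v) : ℤ), ?_, ?_, ?_, ?_⟩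
  · intro u v
    exact hxall (Sum.inl (u, v))
  · intro u v huv
    exact hsupp0 u v huv
  · intro u
    have hs : Function.support (fun v => (x (u, v) : ℤ)) ⊆ ↑(Nb u) := by
      intro v hv
      by_contra hvn
      exact hv (hsupp0 u v (fun ha => hvn ((hNbmem u v).2 ha)))
    rw [finsum_eq_sum_of_support_subset _ hs]
    exact hxall (Sum.inr u)
  · intro u v
    have hKm : (x (u, v) : ℤ) ∈ ({⌊g u v⌋, ⌈g u v⌉} : Finset ℤ) := (x (u, v)).2
    simp only [Finset.mem_insert, Finset.mem_singleton] at hKm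
    show |((x (u, v) : ℤ) : ℝ) - g u v| < 1
    rw [abs_lt]
    rcases hKm with h | h <;> rw [h]
    · constructor
      · linarith [Int.sub_one_lt_floor (g u v)]
      · linarith [Int.floor_le (g u v)]
    · constructor
      · linarith [Int.le_ceil (g u v)]
      · linarith [Int.ceil_lt_add_one (g u v)]
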